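/- arXiv:2604.23223 — 4 statements merged into one kernel-verified Lean document; each statement's English description precedes it below -/
import Mathlib

section
/- For all natural numbers n and l with l ≤ n, the sum over i from 0 to l of C(n-i, i) * C(l+i, 2i+1) equals the sum over i from 0 to l of C(n-i, i-1) * C(l+i, 2i), where C denotes the usual binomial coefficient (with C(a, b) = 0 when b < 0 or b > a). -/
open Finset

/-- Generalized binomial coefficient: classical for nonnegative upper index,
`(-1)^k * C(k-m-1, k)` for negative upper index, and `0` for negative lower index. -/
def gchoose (m k : ℤ) : ℤ :=
  if k < 0 then 0
  else if m < 0 then (-1) ^ k.toNat * ((k - m - 1).toNat.choose k.toNat : ℤ)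
  else (m.toNat.choose k.toNat : ℤ)

open Polynomial


noncomputable def Ff (n : ℕ) : ℤ[X] :=
  ∑ i ∈ range (n+1), C (((n-i).choose i : ℤ)) * (X*(1+X))^i

lemma Ff_zero : Ff 0 = 1 := by simp [Ff]

lemma Ff_one : Ff 1 = 1 := by
  simp [Ff, Finset.sum_range_succ]

lemma Ff_pascal (n : ℕ) : Ff (n+2) = Ff (n+1) + (X*(1+X)) * Ff n := by
  have h2 : Ff (n+2)
      = ∑ j ∈ range (n+2), C (((n+1-j).choose (j+1) : ℤ)) * (X*(1+X))^(j+1) + 1 := by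
    rw [Ff, Finset.sum_range_succ']
    simp
  have h2' : Ff (n+2)
      = ∑ j ∈ range (n+1), C (((n+1-j).choose (j+1) : ℤ)) * (X*(1+X))^(j+1) + 1 := by
    rw [h2, Finset.sum_range_succ]
    simp
  have h1 : Ff (n+1)
      = ∑ j ∈ range (n+1), C (((n-j).choose (j+1) : ℤ)) * (X*(1+X))^(j+1) + 1 := by
    rw [Ff, Finset.sum_range_succ']
    simp
  have hsplit : ∀ j ∈ range (n+1),
      C (((n+1-j).choose (j+1) : ℤ)) * (X*(1+X))^(j+1)
        = C (((n-j).choose (j+1) : ℤ)) * (X*(1+X))^(j+1)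
          + (X*(1+X)) * (C (((n-j).choose j : ℤ)) * (X*(1+X))^j) := by
    intro j hj
    rw [Finset.mem_range] at hj
    have : n+1-j = (n-j)+1 := by omega
    rw [this, Nat.choose_succ_succ]
    push_cast
    rw [C_add]
    ring
  rw [h2', Finset.sum_congr rfl hsplit, Finset.sum_add_distrib, h1, Ff, Finset.mul_sum]
  ring

lemma Ff_key (n : ℕ) : Ff (n+1) = (1+X) * Ff n + (-X)^(n+1) := by
  induction n with
  | zero => rw [Ff_one, Ff_zero]; ring
  | succ m ih =>
      rw [Ff_pascal, ih]
      ring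

lemma coeff_one_add_X (m k : ℕ) : ((1+X:ℤ[X])^m).coeff k = m.choose k := by
  rw [add_comm]; exact coeff_X_add_one_pow ℤ m k

lemma coeff_expand (k m d : ℕ) :
    ((1+X:ℤ[X])^m * Ff k).coeff d
      = ∑ i ∈ range (k+1), ((k-i).choose i : ℤ)
          * (if i ≤ d then (((m+i).choose (d-i) : ℕ) : ℤ) else 0) := by
  rw [Ff, Finset.mul_sum]
  rw [finset_sum_coeff]
  refine Finset.sum_congr rfl ?_
  intro i hi
  have hre : (1+X:ℤ[X])^m * (C (((k-i).choose i : ℤ)) * (X*(1+X))^i)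
      = C (((k-i).choose i : ℤ)) * ((1+X)^(m+i) * X^i) := by
    rw [pow_add, mul_pow]; ring
  rw [hre, coeff_C_mul, coeff_mul_X_pow']
  split
  · rw [coeff_one_add_X]
  · rw [mul_zero]

lemma LHS_eq (n l : ℕ) (h1 : 1 ≤ l) (h2 : l ≤ n) :
    ((1+X:ℤ[X])^l * Ff n).coeff (l-1)
      = ∑ i ∈ range l, ((n-i).choose i : ℤ) * ((l+i).choose (2*i+1) : ℤ) := by
  rw [coeff_expand]
  have hsub : range l ⊆ range (n+1) := Finset.range_subset_range.2 (by omega)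
  rw [← Finset.sum_subset hsub (by
    intro i _ hnot
    rw [Finset.mem_range] at hnot
    rw [if_neg (by omega), mul_zero])]
  refine Finset.sum_congr rfl ?_
  intro i hi
  rw [Finset.mem_range] at hi
  rw [if_pos (by omega : i ≤ l-1)]
  congr 2
  have hd : l-1-i = (l+i)-(2*i+1) := by omega
  rw [hd, Nat.choose_symm (by omega : 2*i+1 ≤ l+i)]

lemma RHS_eq (n l : ℕ) (h1 : 1 ≤ l) (h2 : l ≤ n) :
    ((1+X:ℤ[X])^(l+1) * Ff (n-1)).coeff (l-1)
      = ∑ j ∈ range l, ((n-1-j).choose j : ℤ) * ((l+1+j).choose (2*j+2) : ℤ) := by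
  rw [coeff_expand]
  have hsub : range l ⊆ range (n-1+1) := Finset.range_subset_range.2 (by omega)
  rw [← Finset.sum_subset hsub (by
    intro i _ hnot
    rw [Finset.mem_range] at hnot
    rw [if_neg (by omega), mul_zero])]
  refine Finset.sum_congr rfl ?_
  intro j hj
  rw [Finset.mem_range] at hj
  rw [if_pos (by omega : j ≤ l-1)]
  congr 2
  have hd : l-1-j = (l+1+j)-(2*j+2) := by omega
  rw [hd, Nat.choose_symm (by omega : 2*j+2 ≤ l+1+j)]

lemma diff_zero (n l : ℕ) (h1 : 1 ≤ l) (h2 : l ≤ n) :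
    ((1+X:ℤ[X])^l * Ff n).coeff (l-1)
      = ((1+X:ℤ[X])^(l+1) * Ff (n-1)).coeff (l-1) := by
  obtain ⟨k, rfl⟩ : ∃ k, n = k+1 := ⟨n-1, by omega⟩
  have h0 : (1+X:ℤ[X])^(l+1) * Ff (k+1-1) = (1+X)^l * ((1+X) * Ff k) := by
    rw [Nat.add_sub_cancel, pow_succ]; ring
  have h1' : (1+X:ℤ[X])^l * Ff (k+1)
      = (1+X)^l * ((1+X) * Ff k) + ((-1:ℤ[X])^(k+1) * (1+X)^l) * X^(k+1) := by
    rw [Ff_key k, neg_pow]; ring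
  rw [h0, h1', coeff_add, coeff_mul_X_pow', if_neg (by omega), add_zero]

lemma main_nat (n l : ℕ) (h1 : 1 ≤ l) (h2 : l ≤ n) :
    ∑ i ∈ range l, ((n-i).choose i : ℤ) * ((l+i).choose (2*i+1) : ℤ)
      = ∑ j ∈ range l, ((n-1-j).choose j : ℤ) * ((l+1+j).choose (2*j+2) : ℤ) := by
  rw [← LHS_eq n l h1 h2, ← RHS_eq n l h1 h2, diff_zero n l h1 h2]

lemma gchoose_coe (a b : ℕ) : gchoose (a : ℤ) (b : ℤ) = (a.choose b : ℤ) := by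
  unfold gchoose
  rw [if_neg (by omega), if_neg (by omega)]
  simp

lemma Icc_int_eq_map (l : ℕ) :
    Finset.Icc (0:ℤ) (l:ℤ) = (Finset.range (l+1)).map ⟨Nat.cast, Nat.cast_injective⟩ := by
  ext a
  simp only [Finset.mem_Icc, Finset.mem_map, Finset.mem_range, Function.Embedding.coeFn_mk]
  constructor
  · rintro ⟨h0, h1⟩
    exact ⟨a.toNat, by omega, by omega⟩
  · rintro ⟨b, hb, rfl⟩
    constructor <;> omega

theorem stmt_0 (n l : ℕ) (h : l ≤ n) :
    ∑ i ∈ Finset.Icc (0 : ℤ) l, gchoose ((n : ℤ) - i) i * gchoose ((l : ℤ) + i) (2 * i + 1)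
      = ∑ i ∈ Finset.Icc (0 : ℤ) l, gchoose ((n : ℤ) - i) (i - 1) * gchoose ((l : ℤ) + i) (2 * i) := by
  rw [Icc_int_eq_map, Finset.sum_map, Finset.sum_map]
  simp only [Function.Embedding.coeFn_mk]
  rcases Nat.eq_zero_or_pos l with hl1 | hl1
  · subst hl1
    norm_num [gchoose]
  · have L1 : (∑ i ∈ range (l+1), gchoose ((n:ℤ) - i) i * gchoose ((l:ℤ) + i) (2*i+1))
        = ∑ i ∈ range l, ((n-i).choose i : ℤ) * ((l+i).choose (2*i+1) : ℤ) := by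
      have hL : ∀ i ∈ range (l+1),
          gchoose ((n:ℤ) - i) i * gchoose ((l:ℤ) + i) (2*(i:ℤ)+1)
            = ((n-i).choose i : ℤ) * ((l+i).choose (2*i+1) : ℤ) := by
        intro i hi; rw [Finset.mem_range] at hi
        have e1 : (n:ℤ) - i = ((n - i : ℕ) : ℤ) := by omega
        have e2 : (l:ℤ) + i = ((l + i : ℕ) : ℤ) := by push_cast; ring
        have e3 : 2*(i:ℤ)+1 = ((2*i+1 : ℕ) : ℤ) := by push_cast; ring
        rw [e1, e2, e3, gchoose_coe, gchoose_coe]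
      rw [Finset.sum_congr rfl hL, Finset.sum_range_succ,
        Nat.choose_eq_zero_of_lt (show l+l < 2*l+1 by omega)]
      push_cast
      ring
    have R1 : (∑ i ∈ range (l+1), gchoose ((n:ℤ) - i) ((i:ℤ) - 1) * gchoose ((l:ℤ) + i) (2*i))
        = ∑ j ∈ range l, ((n-1-j).choose j : ℤ) * ((l+1+j).choose (2*j+2) : ℤ) := by
      rw [Finset.sum_range_succ']
      have h0 : gchoose ((n:ℤ) - (0:ℕ)) (((0:ℕ):ℤ) - 1) * gchoose ((l:ℤ) + (0:ℕ)) (2*((0:ℕ):ℤ)) = 0 := by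
        norm_num [gchoose]
      rw [h0, add_zero]
      refine Finset.sum_congr rfl ?_
      intro j hj; rw [Finset.mem_range] at hj
      have e1 : (n:ℤ) - ((j+1 : ℕ):ℤ) = ((n - 1 - j : ℕ) : ℤ) := by omega
      have e2 : ((j+1 : ℕ):ℤ) - 1 = ((j : ℕ) : ℤ) := by push_cast; ring
      have e3 : (l:ℤ) + ((j+1 : ℕ):ℤ) = ((l + 1 + j : ℕ) : ℤ) := by push_cast; ring
      have e4 : 2*((j+1 : ℕ):ℤ) = ((2*j+2 : ℕ) : ℤ) := by push_cast; ring
      rw [e1, e2, e3, e4, gchoose_coe, gchoose_coe]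
    rw [L1, R1]
    exact main_nat n l hl1 h
end

section
/- For all natural numbers n and l (with no restriction between them), the sum over i from 0 to l of C(n-i, i) * C(l+i, 2i+1) equals the sum over i from 0 to l of C(n-i, i-1) * C(l+i, 2i), where for a negative upper index m < 0 and k ≥ 0 one defines C(m, k) := (-1)^k * C(k - m - 1, k), and C(m, k) := 0 for k < 0. Here n - i is interpreted as an integer, so terms with i > n use the generalized binomial coefficient. -/
open Finset

lemma gchoose_neg (m k : ℤ) (hk : k < 0) : gchoose m k = 0 := by
  unfold gchoose; rw [if_pos hk]

lemma gchoose_of_nonneg {m k : ℤ} (hm : 0 ≤ m) (hk : 0 ≤ k) :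
    gchoose m k = (m.toNat.choose k.toNat : ℤ) := by
  unfold gchoose; rw [if_neg (by omega), if_neg (by omega)]

lemma gchoose_of_neg {m k : ℤ} (hm : m < 0) (hk : 0 ≤ k) :
    gchoose m k = (-1) ^ k.toNat * ((k - m - 1).toNat.choose k.toNat : ℤ) := by
  unfold gchoose; rw [if_neg (by omega), if_pos hm]

lemma gchoose_zero_right (m : ℤ) : gchoose m 0 = 1 := by
  unfold gchoose
  split_ifs with h1 h2 <;> simp at h1 ⊢

lemma gchoose_vanish {m k : ℤ} (hm : 0 ≤ m) (h : m < k) : gchoose m k = 0 := by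
  rw [gchoose_of_nonneg hm (by omega)]
  rw [Nat.choose_eq_zero_of_lt (by omega)]
  simp

lemma gchoose_pascal (m k : ℤ) :
    gchoose m k = gchoose (m-1) k + gchoose (m-1) (k-1) := by
  rcases lt_or_ge k 0 with hk | hk
  · rw [gchoose_neg _ _ hk, gchoose_neg _ _ hk, gchoose_neg _ _ (by omega)]; ring
  rcases eq_or_lt_of_le hk with hk0 | hk1
  · rw [← hk0]
    rw [gchoose_zero_right, gchoose_zero_right, gchoose_neg _ _ (by omega)]; ring
  -- 0 < k
  rcases lt_trichotomy m 0 with hm | hm | hm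
  · -- m < 0
    rw [gchoose_of_neg hm hk, gchoose_of_neg (by omega) hk, gchoose_of_neg (by omega) (by omega)]
    have h1 : (k - (m-1) - 1).toNat = (k - m - 1).toNat + 1 := by omega
    have h2 : k.toNat = (k-1).toNat + 1 := by omega
    have h3 : (k - 1 - (m-1) - 1).toNat = (k - m - 1).toNat := by omega
    rw [h1, h2, h3, Nat.choose_succ_succ]
    push_cast
    rw [pow_succ]
    ring
  · -- m = 0
    subst hm
    rw [gchoose_of_nonneg le_rfl hk, gchoose_of_neg (by omega) hk,
      gchoose_of_neg (by omega) (by omega)]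
    have h0 : (0:ℤ).toNat = 0 := rfl
    rw [h0, Nat.choose_eq_zero_of_lt (by omega)]
    have h1 : (k - (0-1) - 1).toNat = k.toNat := by omega
    have h2 : (k - 1 - (0-1) - 1).toNat = (k-1).toNat := by omega
    have h3 : k.toNat = (k-1).toNat + 1 := by omega
    rw [h1, h2, Nat.choose_self, Nat.choose_self, h3]
    push_cast
    rw [pow_succ]
    ring
  · -- 0 < m
    rw [gchoose_of_nonneg (by omega) hk, gchoose_of_nonneg (by omega) hk,
      gchoose_of_nonneg (by omega) (by omega)]
    have h1 : m.toNat = (m-1).toNat + 1 := by omega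
    have h2 : k.toNat = (k-1).toNat + 1 := by omega
    rw [h1, h2, Nat.choose_succ_succ]
    push_cast
    ring

lemma gchoose_symm {m : ℤ} (hm : 0 ≤ m) (k : ℤ) : gchoose m k = gchoose m (m - k) := by
  rcases lt_or_ge k 0 with hk | hk
  · rw [gchoose_neg _ _ hk, gchoose_vanish hm (by omega)]
  rcases le_or_gt k m with hkm | hkm
  · rw [gchoose_of_nonneg hm hk, gchoose_of_nonneg hm (by omega)]
    have h1 : (m - k).toNat = m.toNat - k.toNat := by omega
    rw [h1, Nat.choose_symm (by omega)]
  · rw [gchoose_vanish hm hkm, gchoose_neg _ _ (by omega)]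

lemma gchoose_neg_one {k : ℤ} (hk : 0 ≤ k) : gchoose (-1) k = (-1) ^ k.toNat := by
  rw [gchoose_of_neg (by omega) hk]
  have h1 : (k - (-1) - 1).toNat = k.toNat := by omega
  rw [h1, Nat.choose_self]
  simp

lemma gchoose_self_nonneg {m : ℤ} (hm : 0 ≤ m) : gchoose m m = 1 := by
  rw [gchoose_of_nonneg hm hm, Nat.choose_self]; simp

/-- `S m M = ∑_{k=0}^{M} [C(m+k, M-k) C(M-k, k) - C(m+k, M+1-k) C(M-k, k-1)]`. -/
def Sf (m : ℤ) (M : ℕ) : ℤ :=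
  ∑ k ∈ range (M+1),
    (gchoose (m + k) ((M:ℤ) - k) * gchoose ((M:ℤ) - k) k
      - gchoose (m + k) ((M:ℤ) - k + 1) * gchoose ((M:ℤ) - k) ((k:ℤ) - 1))

lemma Sf_anchor (M : ℕ) : Sf 0 M = (-1) ^ M := by
  have hterm : ∀ k ∈ range (M+1),
      (gchoose ((0:ℤ) + k) ((M:ℤ) - k) * gchoose ((M:ℤ) - k) k
        - gchoose ((0:ℤ) + k) ((M:ℤ) - k + 1) * gchoose ((M:ℤ) - k) ((k:ℤ) - 1))
      = (if 2*k = M then (1:ℤ) else 0) - (if 2*k = M+1 then (1:ℤ) else 0) := by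
    intro k hk
    rw [Finset.mem_range] at hk
    rcases lt_trichotomy (2*k) M with h | h | h
    · rw [if_neg (by omega), if_neg (by omega)]
      have v1 : gchoose ((0:ℤ)+k) ((M:ℤ)-k) = 0 := gchoose_vanish (by omega) (by omega)
      have v2 : gchoose ((0:ℤ)+k) ((M:ℤ)-k+1) = 0 := gchoose_vanish (by omega) (by omega)
      rw [v1, v2]; ring
    · rw [if_pos h, if_neg (by omega)]
      have v2 : gchoose ((0:ℤ)+k) ((M:ℤ)-k+1) = 0 := gchoose_vanish (by omega) (by omega)
      have e1 : (M:ℤ) - k = (k:ℤ) := by omega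
      rw [v2, e1, zero_add, gchoose_self_nonneg (by omega)]
      ring
    · have v1 : gchoose ((M:ℤ)-k) (k:ℤ) = 0 := gchoose_vanish (by omega) (by omega)
      rw [if_neg (by omega), v1, mul_zero]
      rcases eq_or_lt_of_le (show M + 1 ≤ 2*k by omega) with h2 | h2
      · rw [if_pos h2.symm]
        have e1 : (M:ℤ) - k + 1 = (k:ℤ) := by omega
        have e2 : (M:ℤ) - k = (k:ℤ) - 1 := by omega
        rw [e1, e2, zero_add, gchoose_self_nonneg (by omega),
          show (k:ℤ) - 1 = ((k-1:ℕ):ℤ) by omega, gchoose_self_nonneg (by omega)]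
        ring
      · rw [if_neg (by omega)]
        have v2 : gchoose ((M:ℤ)-k) ((k:ℤ)-1) = 0 := gchoose_vanish (by omega) (by omega)
        rw [v2]; ring
  rw [Sf, Finset.sum_congr rfl hterm, Finset.sum_sub_distrib]
  rcases Nat.even_or_odd M with ⟨t, ht⟩ | ⟨t, ht⟩
  · have h1 : ∀ k ∈ range (M+1), (if 2*k = M then (1:ℤ) else 0) = (if k = t then (1:ℤ) else 0) := by
      intro k _; exact if_congr (by omega) rfl rfl
    have h2 : ∀ k ∈ range (M+1), (if 2*k = M+1 then (1:ℤ) else 0) = 0 := by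
      intro k _; rw [if_neg (by omega)]
    rw [Finset.sum_congr rfl h1, Finset.sum_congr rfl h2, Finset.sum_const_zero,
      Finset.sum_ite_eq' (range (M+1)) t (fun _ => (1:ℤ)), if_pos (by rw [Finset.mem_range]; omega)]
    rw [show M = 2*t by omega]
    rw [pow_mul]
    norm_num
  · have h1 : ∀ k ∈ range (M+1), (if 2*k = M then (1:ℤ) else 0) = 0 := by
      intro k _; rw [if_neg (by omega)]
    have h2 : ∀ k ∈ range (M+1), (if 2*k = M+1 then (1:ℤ) else 0) = (if k = t+1 then (1:ℤ) else 0) := by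
      intro k _; exact if_congr (by omega) rfl rfl
    rw [Finset.sum_congr rfl h1, Finset.sum_congr rfl h2, Finset.sum_const_zero,
      Finset.sum_ite_eq' (range (M+1)) (t+1) (fun _ => (1:ℤ)), if_pos (by rw [Finset.mem_range]; omega)]
    rw [show M = 2*t+1 by omega]
    rw [pow_succ, pow_mul]
    norm_num

def Qf (m : ℤ) (M : ℕ) : ℤ :=
  ∑ k ∈ range (M+1),
    (gchoose (m + k) ((M:ℤ) - 1 - k) * gchoose ((M:ℤ) - k) k
      - gchoose (m + k) ((M:ℤ) - k) * gchoose ((M:ℤ) - k) ((k:ℤ) - 1))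

lemma SQ (m : ℤ) (M : ℕ) : Sf m M = Sf (m-1) M + Qf (m-1) M := by
  rw [Sf, Sf, Qf, ← Finset.sum_add_distrib]
  apply Finset.sum_congr rfl
  intro k _
  have hp1 := gchoose_pascal (m + k) ((M:ℤ) - k)
  have hp2 := gchoose_pascal (m + k) ((M:ℤ) - k + 1)
  have e1 : m + (k:ℤ) - 1 = m - 1 + k := by ring
  have e2 : (M:ℤ) - k - 1 = (M:ℤ) - 1 - k := by ring
  have e3 : (M:ℤ) - k + 1 - 1 = (M:ℤ) - k := by ring
  rw [e1, e2] at hp1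
  rw [e1, e3] at hp2
  rw [hp1, hp2]
  ring

lemma Sf_eq (M : ℕ) : ∀ m : ℤ, Sf m M = (-1) ^ M := by
  induction M using Nat.strong_induction_on with
  | _ M ih =>
    rcases M with _ | M1
    · intro m
      rw [Sf, Finset.sum_range_one]
      push_cast
      rw [gchoose_zero_right, gchoose_zero_right, gchoose_neg 0 (-1) (by norm_num)]
      ring
    rcases M1 with _ | N
    · intro m
      rw [Sf, Finset.sum_range_succ, Finset.sum_range_one]
      push_cast
      have h10 : gchoose (1:ℤ) 0 = 1 := gchoose_zero_right 1
      have h00 : gchoose (0:ℤ) 0 = 1 := gchoose_zero_right 0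
      have h1n : gchoose (1:ℤ) (-1) = 0 := gchoose_neg 1 (-1) (by norm_num)
      have h01 : gchoose (0:ℤ) 1 = 0 := gchoose_vanish (by norm_num) (by norm_num)
      have hp := gchoose_pascal (m+1) 1
      rw [show m + 1 - 1 = m by ring, show (1:ℤ) - 1 = 0 by ring, gchoose_zero_right] at hp
      rw [h10, h00, h1n, h01, hp]
      ring
    -- M = N+2
    have hM1 : ∀ m : ℤ, Sf m (N+1) = (-1) ^ (N+1) := ih (N+1) (by omega)
    have hM0 : ∀ m : ℤ, Sf m N = (-1) ^ N := ih N (by omega)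
    have hQ0 : ∀ m : ℤ, Qf m (N+2) = 0 := by
      intro m
      have hsplit : Qf m (N+2)
          = (∑ k ∈ range (N+3),
              (gchoose (m + k) ((N:ℤ) + 1 - k) * gchoose ((N:ℤ) + 1 - k) k
                - gchoose (m + k) ((N:ℤ) + 2 - k) * gchoose ((N:ℤ) + 1 - k) ((k:ℤ) - 1)))
          + (∑ k ∈ range (N+3),
              (gchoose (m + k) ((N:ℤ) + 1 - k) * gchoose ((N:ℤ) + 1 - k) ((k:ℤ) - 1)
                - gchoose (m + k) ((N:ℤ) + 2 - k) * gchoose ((N:ℤ) + 1 - k) ((k:ℤ) - 2))) := by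
        rw [Qf, ← Finset.sum_add_distrib]
        apply Finset.sum_congr rfl
        intro k _
        have hp1 := gchoose_pascal ((N:ℤ) + 2 - k) (k:ℤ)
        have hp2 := gchoose_pascal ((N:ℤ) + 2 - k) ((k:ℤ) - 1)
        have e1 : (N:ℤ) + 2 - k - 1 = (N:ℤ) + 1 - k := by ring
        have e2 : (k:ℤ) - 1 - 1 = (k:ℤ) - 2 := by ring
        rw [e1] at hp1 hp2
        rw [e2] at hp2
        have c1 : ((N+2:ℕ):ℤ) - 1 - k = (N:ℤ) + 1 - k := by push_cast; ring
        have c2 : ((N+2:ℕ):ℤ) - k = (N:ℤ) + 2 - k := by push_cast; ring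
        rw [c1, c2, hp1, hp2]
        ring
      have hB1 : (∑ k ∈ range (N+3),
            (gchoose (m + k) ((N:ℤ) + 1 - k) * gchoose ((N:ℤ) + 1 - k) k
              - gchoose (m + k) ((N:ℤ) + 2 - k) * gchoose ((N:ℤ) + 1 - k) ((k:ℤ) - 1)))
          = Sf m (N+1) + (-1) ^ (N+2) := by
        rw [show N+3 = (N+2)+1 from rfl, Finset.sum_range_succ]
        congr 1
        · rw [Sf]
          apply Finset.sum_congr rfl
          intro k _
          push_cast
          ring_nf
        · have e1 : (N:ℤ) + 1 - ((N+2:ℕ):ℤ) = -1 := by push_cast; ring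
          have e2 : (N:ℤ) + 2 - ((N+2:ℕ):ℤ) = 0 := by push_cast; ring
          rw [e1, e2, gchoose_zero_right, gchoose_neg _ (-1) (by norm_num), zero_mul,
            gchoose_neg_one (show (0:ℤ) ≤ ((N+2:ℕ):ℤ) - 1 by push_cast; omega)]
          have e3 : (((N+2:ℕ):ℤ) - 1).toNat = N+1 := by omega
          rw [e3, pow_succ]
          ring
      have hB2 : (∑ k ∈ range (N+3),
            (gchoose (m + k) ((N:ℤ) + 1 - k) * gchoose ((N:ℤ) + 1 - k) ((k:ℤ) - 1)
              - gchoose (m + k) ((N:ℤ) + 2 - k) * gchoose ((N:ℤ) + 1 - k) ((k:ℤ) - 2)))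
          = Sf (m+1) N - (-1) ^ (N+2) := by
        rw [show N+3 = (N+2)+1 from rfl, Finset.sum_range_succ']
        have hz : (gchoose (m + ((0:ℕ):ℤ)) ((N:ℤ) + 1 - ((0:ℕ):ℤ)) * gchoose ((N:ℤ) + 1 - ((0:ℕ):ℤ)) (((0:ℕ):ℤ) - 1)
            - gchoose (m + ((0:ℕ):ℤ)) ((N:ℤ) + 2 - ((0:ℕ):ℤ)) * gchoose ((N:ℤ) + 1 - ((0:ℕ):ℤ)) (((0:ℕ):ℤ) - 2)) = 0 := by
          have a1 : gchoose ((N:ℤ) + 1 - ((0:ℕ):ℤ)) (((0:ℕ):ℤ) - 1) = 0 :=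
            gchoose_neg _ _ (by omega)
          have a2 : gchoose ((N:ℤ) + 1 - ((0:ℕ):ℤ)) (((0:ℕ):ℤ) - 2) = 0 :=
            gchoose_neg _ _ (by omega)
          rw [a1, a2]
          ring
        rw [hz, add_zero]
        rw [show N+2 = (N+1)+1 from rfl, Finset.sum_range_succ]
        congr 1
        · rw [Sf]
          apply Finset.sum_congr rfl
          intro k _
          push_cast
          ring_nf
        · have e1 : (N:ℤ) + 1 - ((N+1+1:ℕ):ℤ) = -1 := by push_cast; ring
          have e2 : (N:ℤ) + 2 - ((N+1+1:ℕ):ℤ) = 0 := by push_cast; ring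
          rw [e1, e2, gchoose_zero_right, gchoose_neg _ (-1) (by norm_num), zero_mul,
            gchoose_neg_one (show (0:ℤ) ≤ ((N+1+1:ℕ):ℤ) - 2 by push_cast; omega)]
          have e3 : (((N+1+1:ℕ):ℤ) - 2).toNat = N := by omega
          rw [e3, pow_succ, pow_succ]
          ring
      rw [hsplit, hB1, hB2, hM1 m, hM0 (m+1)]
      ring
    have hconst : ∀ m : ℤ, Sf m (N+2) = Sf (m-1) (N+2) := by
      intro m
      rw [SQ m (N+2), hQ0 (m-1), add_zero]
    have hall : ∀ m : ℤ, Sf m (N+2) = Sf 0 (N+2) := by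
      intro m
      induction m using Int.induction_on with
      | zero => rfl
      | succ i ihi =>
        have h := hconst ((i:ℤ)+1)
        rw [show ((i:ℤ)+1)-1 = (i:ℤ) by ring] at h
        rw [h, ihi]
      | pred i ihi =>
        rw [show (-(i:ℤ) - 1 : ℤ) = -(i:ℤ) - 1 from rfl, ← hconst (-(i:ℤ))]
        exact ihi
    intro m
    rw [hall m, Sf_anchor]

def Tt (n : ℤ) (l : ℕ) (a b : ℤ) : ℤ :=
  ∑ i ∈ range (l+1), gchoose (n - i) ((i:ℤ) + a) * gchoose ((l:ℤ) + i) (2*i + b)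

def Psi (n : ℤ) (l : ℕ) (a : ℕ) : ℤ :=
  ∑ j ∈ range a,
    (gchoose (n + j + 1) ((a:ℤ) - j - 2) * gchoose ((l:ℤ) - j - 1) ((l:ℤ) - a + j + 1)
      - gchoose (n + j + 1) ((a:ℤ) - j - 1) * gchoose ((l:ℤ) - j - 1) ((l:ℤ) - a + j))

lemma TREC (n : ℤ) (l : ℕ) (a b : ℤ) (hb : 0 ≤ b) :
    Tt n (l+1) a b = Tt n l a b + Tt (n-1) (l+1) (a+1) (b+1)
      + gchoose n a * gchoose (l:ℤ) (b-1) := by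
  have hsplit : Tt n (l+1) a b
      = (∑ i ∈ range (l+2), gchoose (n - i) ((i:ℤ) + a) * gchoose ((l:ℤ) + i) (2*i + b))
      + (∑ i ∈ range (l+2), gchoose (n - i) ((i:ℤ) + a) * gchoose ((l:ℤ) + i) (2*i + b - 1)) := by
    rw [Tt, ← Finset.sum_add_distrib]
    apply Finset.sum_congr rfl
    intro i _
    have hp := gchoose_pascal ((l:ℤ) + 1 + i) (2*(i:ℤ) + b)
    have e1 : ((l:ℤ)+1+i) - 1 = (l:ℤ) + i := by ring
    rw [e1] at hp
    have e3 : (((l+1:ℕ)):ℤ) + (i:ℤ) = (l:ℤ) + 1 + i := by push_cast; ring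
    rw [e3, hp]
    ring
  rw [hsplit]
  have h1 : (∑ i ∈ range (l+2), gchoose (n - i) ((i:ℤ) + a) * gchoose ((l:ℤ) + i) (2*i + b))
      = Tt n l a b := by
    rw [show l + 2 = (l+1) + 1 from rfl, Finset.sum_range_succ, Tt]
    have hv : gchoose ((l:ℤ) + ((l+1:ℕ):ℤ)) (2*((l+1:ℕ):ℤ) + b) = 0 := by
      apply gchoose_vanish (by push_cast; omega) (by push_cast; omega)
    rw [hv, mul_zero, add_zero]
  have h2 : (∑ i ∈ range (l+2), gchoose (n - i) ((i:ℤ) + a) * gchoose ((l:ℤ) + i) (2*i + b - 1))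
      = Tt (n-1) (l+1) (a+1) (b+1) + gchoose n a * gchoose (l:ℤ) (b-1) := by
    rw [show l + 2 = (l+1) + 1 from rfl, Finset.sum_range_succ']
    congr 1
    · have hv : gchoose (((l+1:ℕ):ℤ) + ((l+1:ℕ):ℤ)) (2*((l+1:ℕ):ℤ) + (b+1)) = 0 := by
        apply gchoose_vanish (by push_cast; omega) (by push_cast; omega)
      rw [Tt]
      conv_rhs => rw [Finset.sum_range_succ]
      rw [hv, mul_zero, add_zero]
      apply Finset.sum_congr rfl
      intro i _
      have e1 : n - ((i:ℤ)+1) = n - 1 - i := by ring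
      have e2 : ((i:ℤ)+1) + a = (i:ℤ) + (a+1) := by ring
      have e3 : (l:ℤ) + ((i:ℤ)+1) = ((l+1:ℕ):ℤ) + i := by push_cast; ring
      have e4 : 2*((i:ℤ)+1) + b - 1 = 2*(i:ℤ) + (b+1) := by ring
      have ec : ((i+1:ℕ):ℤ) = (i:ℤ) + 1 := by push_cast; ring
      rw [ec, e1, e2, e3, e4]
    · norm_num
  rw [h1, h2]
  ring

lemma PSIREC (n : ℤ) (l : ℕ) (a : ℕ) :
    Psi n (l+1) a = Psi n l a + Psi (n-1) (l+1) (a+1)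
      + gchoose n a * gchoose (l:ℤ) a - gchoose n ((a:ℤ)-1) * gchoose (l:ℤ) ((a:ℤ)-1) := by
  have hsplit : Psi n (l+1) a = Psi n l a
      + ∑ j ∈ range a,
          (gchoose (n + j + 1) ((a:ℤ) - j - 2) * gchoose ((l:ℤ) - j - 1) ((l:ℤ) - a + j + 2)
            - gchoose (n + j + 1) ((a:ℤ) - j - 1) * gchoose ((l:ℤ) - j - 1) ((l:ℤ) - a + j + 1)) := by
    rw [Psi, Psi, ← Finset.sum_add_distrib]
    apply Finset.sum_congr rfl
    intro j _
    have hp1 := gchoose_pascal ((l:ℤ) - j) ((l:ℤ) - a + j + 2)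
    have hp2 := gchoose_pascal ((l:ℤ) - j) ((l:ℤ) - a + j + 1)
    have e1 : ((l:ℤ) - j) - 1 = (l:ℤ) - j - 1 := by ring
    have e2 : ((l:ℤ) - a + j + 2) - 1 = (l:ℤ) - a + j + 1 := by ring
    have e3 : ((l:ℤ) - a + j + 1) - 1 = (l:ℤ) - a + j := by ring
    rw [e1, e2] at hp1
    rw [e1, e3] at hp2
    have c1 : ((l+1:ℕ):ℤ) - j - 1 = (l:ℤ) - j := by push_cast; ring
    have c2 : ((l+1:ℕ):ℤ) - a + j + 1 = (l:ℤ) - a + j + 2 := by push_cast; ring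
    have c3 : ((l+1:ℕ):ℤ) - a + j = (l:ℤ) - a + j + 1 := by push_cast; ring
    rw [c1, c2, c3, hp1, hp2]
    ring
  have h2 : Psi (n-1) (l+1) (a+1)
      = (∑ j ∈ range a,
          (gchoose (n + j + 1) ((a:ℤ) - j - 2) * gchoose ((l:ℤ) - j - 1) ((l:ℤ) - a + j + 2)
            - gchoose (n + j + 1) ((a:ℤ) - j - 1) * gchoose ((l:ℤ) - j - 1) ((l:ℤ) - a + j + 1)))
        + (gchoose n ((a:ℤ)-1) * gchoose (l:ℤ) ((l:ℤ) - a + 1)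
            - gchoose n a * gchoose (l:ℤ) ((l:ℤ) - a)) := by
    rw [Psi, Finset.sum_range_succ']
    congr 1
    · apply Finset.sum_congr rfl
      intro j _
      have ec : ((j+1:ℕ):ℤ) = (j:ℤ)+1 := by push_cast; ring
      rw [ec]
      have e1 : n - 1 + ((j:ℤ)+1) + 1 = n + j + 1 := by ring
      have e2 : ((a+1:ℕ):ℤ) - ((j:ℤ)+1) - 2 = (a:ℤ) - j - 2 := by push_cast; ring
      have e3 : ((l+1:ℕ):ℤ) - ((j:ℤ)+1) - 1 = (l:ℤ) - j - 1 := by push_cast; ring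
      have e4 : ((l+1:ℕ):ℤ) - ((a+1:ℕ):ℤ) + ((j:ℤ)+1) + 1 = (l:ℤ) - a + j + 2 := by push_cast; ring
      have e5 : ((a+1:ℕ):ℤ) - ((j:ℤ)+1) - 1 = (a:ℤ) - j - 1 := by push_cast; ring
      have e6 : ((l+1:ℕ):ℤ) - ((a+1:ℕ):ℤ) + ((j:ℤ)+1) = (l:ℤ) - a + j + 1 := by push_cast; ring
      rw [e1, e2, e3, e4, e5, e6]
    · have e1 : n - 1 + ((0:ℕ):ℤ) + 1 = n := by push_cast; ring
      have e2 : ((a+1:ℕ):ℤ) - ((0:ℕ):ℤ) - 2 = (a:ℤ) - 1 := by push_cast; ring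
      have e3 : ((l+1:ℕ):ℤ) - ((0:ℕ):ℤ) - 1 = (l:ℤ) := by push_cast; ring
      have e4 : ((l+1:ℕ):ℤ) - ((a+1:ℕ):ℤ) + ((0:ℕ):ℤ) + 1 = (l:ℤ) - a + 1 := by push_cast; ring
      have e5 : ((a+1:ℕ):ℤ) - ((0:ℕ):ℤ) - 1 = (a:ℤ) := by push_cast; ring
      have e6 : ((l+1:ℕ):ℤ) - ((a+1:ℕ):ℤ) + ((0:ℕ):ℤ) = (l:ℤ) - a := by push_cast; ring
      rw [e1, e2, e3, e4, e5, e6]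
  have hs1 : gchoose (l:ℤ) ((l:ℤ) - a) = gchoose (l:ℤ) a := by
    rw [← gchoose_symm (by positivity) (a:ℤ)]
  have hs2 : gchoose (l:ℤ) ((l:ℤ) - a + 1) = gchoose (l:ℤ) ((a:ℤ) - 1) := by
    have e : (l:ℤ) - a + 1 = (l:ℤ) - ((a:ℤ) - 1) := by ring
    rw [e, ← gchoose_symm (by positivity) ((a:ℤ)-1)]
  rw [hsplit, h2, hs1, hs2]
  ring

lemma Psi_vanish : ∀ l : ℕ, ∀ a : ℕ, l + 1 ≤ a → ∀ n : ℤ, Psi n l a = 0 := by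
  intro l
  induction l with
  | zero =>
    intro a ha n
    rw [Psi]
    apply Finset.sum_eq_zero
    intro j hj
    rw [Finset.mem_range] at hj
    have h2 : gchoose (((0:ℕ):ℤ) - j - 1) (((0:ℕ):ℤ) - a + j) = 0 := gchoose_neg _ _ (by omega)
    rw [h2, mul_zero]
    rcases eq_or_lt_of_le (Nat.succ_le_of_lt hj) with hje | hjl
    · have h1 : gchoose (n + j + 1) ((a:ℤ) - j - 2) = 0 := gchoose_neg _ _ (by omega)
      rw [h1, zero_mul]
      ring
    · have h1 : gchoose (((0:ℕ):ℤ) - j - 1) (((0:ℕ):ℤ) - a + j + 1) = 0 := gchoose_neg _ _ (by omega)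
      rw [h1, mul_zero]
      ring
  | succ L ihL =>
    intro a ha
    induction a, ha using Nat.le_induction with
    | base =>
      intro n
      rw [Psi, show L+1+1 = (L+1)+1 from rfl, Finset.sum_range_succ]
      have h1 : (∑ j ∈ range (L+1),
          (gchoose (n + j + 1) (((L+1+1:ℕ):ℤ) - j - 2)
              * gchoose (((L+1:ℕ):ℤ) - j - 1) (((L+1:ℕ):ℤ) - ((L+1+1:ℕ):ℤ) + j + 1)
            - gchoose (n + j + 1) (((L+1+1:ℕ):ℤ) - j - 1)
              * gchoose (((L+1:ℕ):ℤ) - j - 1) (((L+1:ℕ):ℤ) - ((L+1+1:ℕ):ℤ) + j)))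
          = Sf (n+1) L := by
        rw [Sf]
        apply Finset.sum_congr rfl
        intro j _
        push_cast
        ring_nf
      rw [h1]
      have e1 : ((L+1+1:ℕ):ℤ) - ((L+1:ℕ):ℤ) - 2 = -1 := by push_cast; ring
      have e2 : ((L+1:ℕ):ℤ) - ((L+1:ℕ):ℤ) - 1 = -1 := by push_cast; ring
      have e4 : ((L+1+1:ℕ):ℤ) - ((L+1:ℕ):ℤ) - 1 = 0 := by push_cast; ring
      have e5 : ((L+1:ℕ):ℤ) - ((L+1+1:ℕ):ℤ) + ((L+1:ℕ):ℤ) = (L:ℤ) := by push_cast; ring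
      rw [e1, e2, e4, e5]
      rw [gchoose_neg _ (-1) (by norm_num), zero_mul, gchoose_zero_right, one_mul,
        gchoose_neg_one (show (0:ℤ) ≤ (L:ℤ) by omega)]
      have e6 : ((L:ℤ)).toNat = L := by omega
      rw [e6, Sf_eq L (n+1)]
      ring
    | succ a ha iha =>
      intro n
      have h := PSIREC (n+1) L a
      rw [iha (n+1), ihL a (by omega) (n+1), show (n+1:ℤ)-1 = n by ring,
        gchoose_vanish (show (0:ℤ) ≤ (L:ℤ) by omega) (show (L:ℤ) < (a:ℤ) by omega),
        gchoose_vanish (show (0:ℤ) ≤ (L:ℤ) by omega) (show (L:ℤ) < (a:ℤ)-1 by omega),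
        mul_zero, mul_zero] at h
      linarith

lemma MAIN : ∀ l : ℕ, ∀ a : ℕ, ∀ n : ℤ,
    Tt n l a ((a:ℤ)+1) - Tt n l ((a:ℤ)-1) a = Psi n l a := by
  intro l
  induction l with
  | zero =>
    intro a n
    rw [Tt, Tt, Finset.sum_range_one, Finset.sum_range_one]
    have v1 : gchoose (((0:ℕ):ℤ) + ((0:ℕ):ℤ)) (2*((0:ℕ):ℤ) + ((a:ℤ)+1)) = 0 :=
      gchoose_vanish (by omega) (by omega)
    rcases Nat.eq_zero_or_pos a with ha | ha
    · subst ha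
      have v2 : gchoose (n - ((0:ℕ):ℤ)) (((0:ℕ):ℤ) + (((0:ℕ):ℤ)-1)) = 0 :=
        gchoose_neg _ _ (by omega)
      rw [v1, v2, mul_zero, zero_mul, Psi, Finset.sum_range_zero]
      ring
    · have v2 : gchoose (((0:ℕ):ℤ) + ((0:ℕ):ℤ)) (2*((0:ℕ):ℤ) + (a:ℤ)) = 0 :=
        gchoose_vanish (by omega) (by omega)
      rw [v1, v2, mul_zero, mul_zero, Psi_vanish 0 a (by omega) n]
      ring
  | succ L ihL =>
    have key : ∀ d : ℕ, ∀ a : ℕ, L + 1 + 1 ≤ a + d → ∀ n : ℤ,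
        Tt n (L+1) a ((a:ℤ)+1) - Tt n (L+1) ((a:ℤ)-1) a = Psi n (L+1) a := by
      intro d
      induction d with
      | zero =>
        intro a ha n
        have h1 : Tt n (L+1) a ((a:ℤ)+1) = 0 := by
          rw [Tt]
          apply Finset.sum_eq_zero
          intro i hi
          rw [Finset.mem_range] at hi
          have hv : gchoose (((L+1:ℕ):ℤ) + i) (2*(i:ℤ) + ((a:ℤ)+1)) = 0 :=
            gchoose_vanish (by omega) (by omega)
          rw [hv, mul_zero]
        have h2 : Tt n (L+1) ((a:ℤ)-1) a = 0 := by
          rw [Tt]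
          apply Finset.sum_eq_zero
          intro i hi
          rw [Finset.mem_range] at hi
          have hv : gchoose (((L+1:ℕ):ℤ) + i) (2*(i:ℤ) + (a:ℤ)) = 0 :=
            gchoose_vanish (by omega) (by omega)
          rw [hv, mul_zero]
        rw [h1, h2, Psi_vanish (L+1) a (by omega) n]
        ring
      | succ d ihd =>
        intro a ha n
        rcases le_or_gt (L+1+1) (a+d) with h | h
        · exact ihd a h n
        have hrec1 := TREC n L (a:ℤ) ((a:ℤ)+1) (by omega)
        have hrec2 := TREC n L ((a:ℤ)-1) (a:ℤ) (by omega)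
        have hmain := ihd (a+1) (by omega) (n-1)
        have houter := ihL a n
        have hpsirec := PSIREC n L a
        push_cast at hmain
        rw [hrec1, hrec2, hpsirec]
        ring_nf
        ring_nf at hmain houter
        linarith
    intro a n
    exact key (L+1+1) a (by omega) n

theorem stmt_1 (n l : ℕ) :
    ∑ i ∈ Finset.Icc (0 : ℤ) l, gchoose ((n : ℤ) - i) i * gchoose ((l : ℤ) + i) (2 * i + 1)
      = ∑ i ∈ Finset.Icc (0 : ℤ) l, gchoose ((n : ℤ) - i) (i - 1) * gchoose ((l : ℤ) + i) (2 * i) := by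
  have hset : Finset.Icc (0:ℤ) (l:ℤ)
      = (range (l+1)).map ⟨fun k : ℕ => (k:ℤ), fun a b h => Nat.cast_injective h⟩ := by
    ext x
    simp only [Finset.mem_map, Finset.mem_range, Finset.mem_Icc, Function.Embedding.coeFn_mk]
    constructor
    · rintro ⟨h0, h1⟩
      exact ⟨x.toNat, by omega, by change ((x.toNat : ℕ) : ℤ) = x; omega⟩
    · rintro ⟨k, hk, rfl⟩
      change (0:ℤ) ≤ (k:ℤ) ∧ (k:ℤ) ≤ (l:ℤ)
      constructor <;> omega
  have hmap : ∀ f : ℤ → ℤ, ∑ i ∈ Finset.Icc (0:ℤ) (l:ℤ), f i = ∑ k ∈ range (l+1), f k := by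
    intro f
    rw [hset, Finset.sum_map]
    exact Finset.sum_congr rfl (fun x _ => rfl)
  have h := MAIN l 0 (n:ℤ)
  rw [Psi, Finset.sum_range_zero, sub_eq_zero, Tt, Tt] at h
  have e1 : (∑ i ∈ range (l+1),
        gchoose ((n:ℤ) - i) ((i:ℤ) + ((0:ℕ):ℤ)) * gchoose ((l:ℤ) + i) (2*(i:ℤ) + (((0:ℕ):ℤ)+1)))
      = ∑ i ∈ range (l+1), gchoose ((n:ℤ) - i) (i:ℤ) * gchoose ((l:ℤ) + i) (2*(i:ℤ) + 1) := by
    apply Finset.sum_congr rfl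
    intro i _
    push_cast
    ring_nf
  have e2 : (∑ i ∈ range (l+1),
        gchoose ((n:ℤ) - i) ((i:ℤ) + (((0:ℕ):ℤ)-1)) * gchoose ((l:ℤ) + i) (2*(i:ℤ) + ((0:ℕ):ℤ)))
      = ∑ i ∈ range (l+1), gchoose ((n:ℤ) - i) ((i:ℤ) - 1) * gchoose ((l:ℤ) + i) (2*(i:ℤ)) := by
    apply Finset.sum_congr rfl
    intro i _
    push_cast
    ring_nf
  rw [e1, e2] at h
  rw [hmap, hmap]
  exact h
end

section
/- For all natural numbers n and l with l > n, the sum over i from 0 to n of [ -C(n-i, i) * C(l+i, 2i+1) + C(n-i, i-1) * C(l+i, 2i) ] equals (-1)^{n+1} * C(l, n+1), where C denotes the classical binomial coefficient with the convention C(a,b)=0 for b<0 or b>a. -/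
open Finset

/-- Binomial coefficient that is zero whenever either index is negative. -/
def cc (a b : ℤ) : ℤ :=
  if 0 ≤ a ∧ 0 ≤ b then (a.toNat.choose b.toNat : ℤ) else 0

lemma cc_neg_left {a b : ℤ} (h : a < 0) : cc a b = 0 := by
  simp only [cc, if_neg]; omega

lemma cc_neg_right {a b : ℤ} (h : b < 0) : cc a b = 0 := by
  simp only [cc, if_neg]; omega

lemma cc_cast (a b : ℕ) : cc a b = (a.choose b : ℤ) := by
  simp [cc]

lemma cc_zero_pos {b : ℤ} (h : 0 < b) : cc 0 b = 0 := by
  unfold cc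
  rw [if_pos (show 0 ≤ (0:ℤ) ∧ 0 ≤ b from ⟨le_refl 0, le_of_lt h⟩)]
  rw [Nat.choose_eq_zero_of_lt (by omega)]
  norm_num

lemma cc_pascal (a : ℤ) (ha : 0 ≤ a) (b : ℤ) :
    cc (a + 1) b = cc a b + cc a (b - 1) := by
  rcases lt_or_ge b 0 with hb | hb
  · rw [cc_neg_right hb, cc_neg_right hb, cc_neg_right (by omega : b - 1 < 0)]; ring
  rcases eq_or_lt_of_le hb with hb0 | hb0
  · rw [← hb0, cc_neg_right (by norm_num : (0:ℤ) - 1 < 0)]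
    unfold cc
    rw [if_pos (show 0 ≤ a + 1 ∧ 0 ≤ (0:ℤ) from ⟨by omega, le_refl 0⟩),
        if_pos (show 0 ≤ a ∧ 0 ≤ (0:ℤ) from ⟨ha, le_refl 0⟩)]
    simp
  · have h1 : (a + 1).toNat = a.toNat + 1 := by omega
    have h2 : b.toNat = (b - 1).toNat + 1 := by omega
    unfold cc
    rw [if_pos (show 0 ≤ a + 1 ∧ 0 ≤ b from ⟨by omega, hb⟩),
        if_pos (show 0 ≤ a ∧ 0 ≤ b from ⟨ha, hb⟩),
        if_pos (show 0 ≤ a ∧ 0 ≤ b - 1 from ⟨ha, by omega⟩)]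
    rw [h1, h2, Nat.choose_succ_succ']
    push_cast
    ring

lemma gchoose_eq_cc {m k : ℤ} (hm : 0 ≤ m) : gchoose m k = cc m k := by
  unfold gchoose cc
  rcases lt_or_ge k 0 with hk | hk
  · rw [if_pos hk, if_neg (by omega)]
  · rw [if_neg (by omega), if_neg (by omega), if_pos ⟨hm, hk⟩]

/-- The summand. -/
def tt (n l : ℕ) (k : ℤ) (i : ℕ) : ℤ :=
  -(cc ((n : ℤ) - i) i * cc ((l : ℤ) + i) (2 * i + 1 - k))
    + cc ((n : ℤ) - i) ((i : ℤ) - 1) * cc ((l : ℤ) + i) (2 * i - k)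

def uu (n l : ℕ) (k : ℤ) (i : ℕ) : ℤ :=
  -(cc ((n : ℤ) + 1 - i) i * cc ((l : ℤ) + i) (2 * i + 1 - k))
    + cc ((n : ℤ) + 1 - i) ((i : ℤ) - 1) * cc ((l : ℤ) + i) (2 * i - k)

def vv (n l : ℕ) (k : ℤ) (i : ℕ) : ℤ :=
  -(cc ((n : ℤ) + 1 - i) ((i : ℤ) - 1) * cc ((l : ℤ) + i) (2 * i + 1 - k))
    + cc ((n : ℤ) + 1 - i) ((i : ℤ) - 2) * cc ((l : ℤ) + i) (2 * i - k)

lemma key : ∀ n l : ℕ, ∀ k : ℤ,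
    ∑ i ∈ range (n + 1), tt n l k i = (-1) ^ (n + 1) * cc l ((n : ℤ) + 1 - k) := by
  intro n
  induction n using Nat.twoStepInduction with
  | zero =>
    intro l k
    simp [tt, cc_neg_right (show ((0:ℕ):ℤ) - 1 < 0 by norm_num)]
    rw [show cc 0 (-1) = 0 from cc_neg_right (by norm_num), show cc 0 0 = 1 by simp [cc]]
    ring
  | one =>
    intro l k
    have e0 : tt 1 l k 0 = -cc l (1 - k) := by
      simp [tt, cc_neg_right (show ((0:ℕ):ℤ) - 1 < 0 by norm_num)]
      rw [show cc 1 (-1) = 0 from cc_neg_right (by norm_num), show cc 1 0 = 1 by simp [cc]]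
      ring
    have e1 : tt 1 l k 1 = cc ((l:ℤ) + 1) (2 - k) := by
      simp only [tt]
      rw [show ((1:ℕ):ℤ) - 1 = 0 by norm_num]
      rw [show ((1:ℕ):ℤ) = (1:ℤ) by norm_num]
      rw [show (1:ℤ) - 1 = (0:ℤ) by norm_num]
      rw [show cc 0 1 = 0 from cc_zero_pos one_pos]
      rw [show cc 0 0 = 1 by simp [cc]]
      rw [show 2 * (1:ℤ) + 1 - k = 2 - k + 1 by ring, show 2 * (1:ℤ) - k = 2 - k by ring]
      ring
    rw [Finset.sum_range_succ, Finset.sum_range_one, e0, e1]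
    have hp := cc_pascal l (by positivity) (2 - k)
    rw [show (2:ℤ) - k - 1 = 1 - k by ring] at hp
    rw [hp]
    rw [show ((1:ℕ):ℤ) + 1 - k = 2 - k by push_cast; ring]
    ring
  | more n ih2 ih1 =>
    intro l k
    have split : ∀ i ∈ range (n + 3), tt (n + 2) l k i = uu n l k i + vv n l k i := by
      intro i hi
      simp only [Finset.mem_range] at hi
      rcases lt_or_ge i (n + 2) with hlt | hge
      · have ha : (0:ℤ) ≤ (n:ℤ) + 1 - i := by
          have : (i:ℤ) < (n:ℤ) + 2 := by exact_mod_cast hlt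
          omega
        have e : ((n + 2 : ℕ) : ℤ) - i = ((n:ℤ) + 1 - i) + 1 := by push_cast; ring
        simp only [tt, uu, vv, e, cc_pascal _ ha]
        ring_nf
      · have hi2 : i = n + 2 := by omega
        subst hi2
        have hneg : ((n:ℤ) + 1 - ((n + 2 : ℕ):ℤ)) < 0 := by push_cast; omega
        have e : ((n + 2 : ℕ) : ℤ) - ((n + 2 : ℕ):ℤ) = 0 := by ring
        simp only [tt, uu, vv, e, cc_neg_left hneg]
        rw [cc_zero_pos (by push_cast; omega : (0:ℤ) < ((n+2:ℕ):ℤ))]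
        rw [cc_zero_pos (by push_cast; omega : (0:ℤ) < ((n+2:ℕ):ℤ) - 1)]
        ring
    rw [Finset.sum_congr rfl split, Finset.sum_add_distrib]
    have first : ∑ i ∈ range (n + 3), uu n l k i = ∑ i ∈ range (n + 2), tt (n + 1) l k i := by
      rw [Finset.sum_range_succ]
      have topz : uu n l k (n + 2) = 0 := by
        have hneg : ((n:ℤ) + 1 - ((n + 2 : ℕ):ℤ)) < 0 := by push_cast; omega
        simp only [uu, cc_neg_left hneg]; ring
      rw [topz, add_zero]
      apply Finset.sum_congr rfl
      intro i hi
      simp only [uu, tt]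
      have e : ((n + 1 : ℕ) : ℤ) - i = (n:ℤ) + 1 - i := by push_cast; ring
      rw [e]
    have second : ∑ i ∈ range (n + 3), vv n l k i
        = ∑ i ∈ range (n + 1), tt n (l + 1) (k - 2) i := by
      rw [Finset.sum_range_succ']
      have botz : vv n l k 0 = 0 := by
        simp only [vv]
        rw [cc_neg_right (by norm_num : ((0:ℕ):ℤ) - 1 < 0),
            cc_neg_right (by norm_num : ((0:ℕ):ℤ) - 2 < 0)]
        ring
      rw [botz, add_zero, Finset.sum_range_succ]
      have topz : vv n l k (n + 1 + 1) = 0 := by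
        have hneg : ((n:ℤ) + 1 - ((n + 1 + 1 : ℕ):ℤ)) < 0 := by push_cast; omega
        simp only [vv, cc_neg_left hneg]; ring
      rw [topz, add_zero]
      apply Finset.sum_congr rfl
      intro i hi
      simp only [vv, tt]
      have e1 : ((n:ℤ) + 1 - ((i + 1 : ℕ):ℤ)) = (n:ℤ) - i := by push_cast; ring
      have e2 : (((i + 1 : ℕ)):ℤ) - 1 = (i:ℤ) := by push_cast; ring
      have e3 : (((i + 1 : ℕ)):ℤ) - 2 = (i:ℤ) - 1 := by push_cast; ring
      have e4 : ((l:ℤ) + ((i + 1:ℕ):ℤ)) = ((l + 1 : ℕ):ℤ) + i := by push_cast; ring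
      have e5 : 2 * ((i + 1:ℕ):ℤ) + 1 - k = 2 * (i:ℤ) + 1 - (k - 2) := by push_cast; ring
      have e6 : 2 * ((i + 1:ℕ):ℤ) - k = 2 * (i:ℤ) - (k - 2) := by push_cast; ring
      rw [e1, e2, e3, e4, e5, e6]
    rw [first, second, ih1 l k, ih2 (l + 1) (k - 2)]
    have hp := cc_pascal l (by positivity) (((n:ℤ)) + 3 - k)
    have e1 : ((n + 1 : ℕ):ℤ) + 1 - k = (n:ℤ) + 2 - k := by push_cast; ring
    have e2 : ((n : ℕ):ℤ) + 1 - (k - 2) = (n:ℤ) + 3 - k := by push_cast; ring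
    have e3 : ((n + 2 : ℕ):ℤ) + 1 - k = (n:ℤ) + 3 - k := by push_cast; ring
    have e4 : ((l + 1 : ℕ):ℤ) = (l:ℤ) + 1 := by push_cast; ring
    have e5 : (n:ℤ) + 3 - k - 1 = (n:ℤ) + 2 - k := by ring
    rw [e1, e2, e3, e4, hp, e5]
    rw [pow_succ, pow_succ, pow_succ]
    ring

lemma sum_Icc_int (f : ℤ → ℤ) : ∀ m : ℕ,
    ∑ i ∈ Finset.Icc (0:ℤ) (m:ℤ), f i = ∑ j ∈ range (m + 1), f j := by
  intro m
  induction m with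
  | zero => simp
  | succ m ih =>
    have e : Finset.Icc (0:ℤ) ((m + 1 : ℕ):ℤ) = insert ((m:ℤ) + 1) (Finset.Icc (0:ℤ) (m:ℤ)) := by
      ext x
      simp only [Finset.mem_Icc, Finset.mem_insert]
      push_cast
      omega
    rw [e, Finset.sum_insert (by simp), Finset.sum_range_succ, ih]
    rw [show ((m + 1 : ℕ):ℤ) = (m:ℤ) + 1 by push_cast; ring]
    ring

theorem stmt_7 (n l : ℕ) (h : n < l) :
    ∑ i ∈ Finset.Icc (0 : ℤ) n,
        (-(gchoose ((n : ℤ) - i) i * gchoose ((l : ℤ) + i) (2 * i + 1))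
          + gchoose ((n : ℤ) - i) (i - 1) * gchoose ((l : ℤ) + i) (2 * i))
      = (-1) ^ (n + 1) * (l.choose (n + 1) : ℤ) := by
  have step1 : ∀ i ∈ Finset.Icc (0:ℤ) (n:ℤ),
      (-(gchoose ((n : ℤ) - i) i * gchoose ((l : ℤ) + i) (2 * i + 1))
          + gchoose ((n : ℤ) - i) (i - 1) * gchoose ((l : ℤ) + i) (2 * i))
      = (-(cc ((n : ℤ) - i) i * cc ((l : ℤ) + i) (2 * i + 1))
          + cc ((n : ℤ) - i) (i - 1) * cc ((l : ℤ) + i) (2 * i)) := by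
    intro i hi
    simp only [Finset.mem_Icc] at hi
    simp only [gchoose_eq_cc (show (0:ℤ) ≤ (n:ℤ) - i by omega),
      gchoose_eq_cc (show (0:ℤ) ≤ (l:ℤ) + i by omega)]
  rw [Finset.sum_congr rfl step1]
  rw [sum_Icc_int (fun i => (-(cc ((n : ℤ) - i) i * cc ((l : ℤ) + i) (2 * i + 1))
          + cc ((n : ℤ) - i) (i - 1) * cc ((l : ℤ) + i) (2 * i))) n]
  have e : ∀ j ∈ range (n + 1),
      (-(cc ((n : ℤ) - j) j * cc ((l : ℤ) + j) (2 * j + 1))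
          + cc ((n : ℤ) - j) ((j:ℤ) - 1) * cc ((l : ℤ) + j) (2 * j)) = tt n l 0 j := by
    intro j hj
    simp only [tt, sub_zero]
  rw [Finset.sum_congr rfl e, key n l 0, sub_zero]
  rw [show (n:ℤ) + 1 = ((n + 1 : ℕ):ℤ) by push_cast; ring, cc_cast]
end

section
/- Define v_{k,n} := sum over i from n+1 to n+k of [ -C(n-i, i) * C(n+k+i, 2i+1) + C(n-i, i-1) * C(n+k+i, 2i) ] with generalized binomial coefficients. Then for all integers n ≥ 0 and k ≥ 1, v_{k,n} = (-1)^n * C(n+k, n+1). -/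
open Finset

/-- The double sequence `v_{k,n}`. -/
noncomputable def vseq (k n : ℤ) : ℤ :=
  ∑ i ∈ Finset.Icc (n + 1) (n + k),
    (-(gchoose (n - i) i * gchoose (n + k + i) (2 * i + 1))
      + gchoose (n - i) (i - 1) * gchoose (n + k + i) (2 * i))

lemma icc_eq_map (n k : ℕ) :
    Finset.Icc ((n:ℤ) + 1) ((n:ℤ) + (k:ℤ))
      = Finset.map ⟨fun j : ℕ => (n:ℤ)+1+(j:ℤ),
          @id (Function.Injective (fun j : ℕ => (n:ℤ)+1+(j:ℤ))) (by intro a b h; simpa using h)⟩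
          (Finset.range k) := by
  ext x
  simp only [Finset.mem_Icc, Finset.mem_map, Finset.mem_range, Function.Embedding.coeFn_mk]
  constructor
  · rintro ⟨h1, h2⟩
    refine ⟨(x - n - 1).toNat, by omega, by show (n:ℤ)+1+(((x - n - 1).toNat : ℕ):ℤ) = x; omega⟩
  · rintro ⟨j, hj, rfl⟩
    show (n:ℤ)+1 ≤ (n:ℤ)+1+(j:ℤ) ∧ (n:ℤ)+1+(j:ℤ) ≤ (n:ℤ)+(k:ℤ)
    omega

lemma g1eval (n j : ℕ) :
    gchoose ((n:ℤ) - ((n:ℤ)+1+(j:ℤ))) ((n:ℤ)+1+(j:ℤ))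
      = (-1:ℤ)^(n+1+j) * ((n+2*j+1).choose j : ℤ) := by
  rw [gchoose, if_neg (by omega), if_pos (by omega)]
  have e1 : ((n:ℤ)+1+(j:ℤ)).toNat = n+1+j := by omega
  have e2 : (((n:ℤ)+1+(j:ℤ)) - ((n:ℤ) - ((n:ℤ)+1+(j:ℤ))) - 1).toNat = n+2*j+1 := by omega
  rw [e1, e2]
  congr 1
  rw [show n+1+j = (n+2*j+1) - j by omega, Nat.choose_symm (by omega)]

lemma g2eval (n j : ℕ) :
    gchoose ((n:ℤ) - ((n:ℤ)+1+(j:ℤ))) (((n:ℤ)+1+(j:ℤ)) - 1)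
      = (-1:ℤ)^(n+j) * ((n+2*j).choose j : ℤ) := by
  rw [gchoose, if_neg (by omega), if_pos (by omega)]
  have e1 : (((n:ℤ)+1+(j:ℤ)) - 1).toNat = n+j := by omega
  have e2 : ((((n:ℤ)+1+(j:ℤ)) - 1) - ((n:ℤ) - ((n:ℤ)+1+(j:ℤ))) - 1).toNat = n+2*j := by omega
  rw [e1, e2]
  congr 1
  rw [show n+j = (n+2*j) - j by omega, Nat.choose_symm (by omega)]

lemma g3eval (n k j : ℕ) :
    gchoose ((n:ℤ) + (k:ℤ) + ((n:ℤ)+1+(j:ℤ))) (2*((n:ℤ)+1+(j:ℤ)) + 1)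
      = ((2*n+k+j+1).choose (2*n+2*j+3) : ℤ) := by
  rw [gchoose, if_neg (by omega), if_neg (by omega)]
  have e1 : ((n:ℤ) + (k:ℤ) + ((n:ℤ)+1+(j:ℤ))).toNat = 2*n+k+j+1 := by omega
  have e2 : (2*((n:ℤ)+1+(j:ℤ)) + 1).toNat = 2*n+2*j+3 := by omega
  rw [e1, e2]

lemma g4eval (n k j : ℕ) :
    gchoose ((n:ℤ) + (k:ℤ) + ((n:ℤ)+1+(j:ℤ))) (2*((n:ℤ)+1+(j:ℤ)))
      = ((2*n+k+j+1).choose (2*n+2*j+2) : ℤ) := by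
  rw [gchoose, if_neg (by omega), if_neg (by omega)]
  have e1 : ((n:ℤ) + (k:ℤ) + ((n:ℤ)+1+(j:ℤ))).toNat = 2*n+k+j+1 := by omega
  have e2 : (2*((n:ℤ)+1+(j:ℤ))).toNat = 2*n+2*j+2 := by omega
  rw [e1, e2]


def zch (N : ℕ) (t : ℤ) : ℤ := if 0 ≤ t then (N.choose t.toNat : ℤ) else 0

lemma zch_natCast (N t : ℕ) : zch N t = (N.choose t : ℤ) := by
  simp [zch]

lemma zch_neg (N : ℕ) {t : ℤ} (h : t < 0) : zch N t = 0 := by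
  simp [zch, not_le.mpr h]

lemma zch_eq_zero_of_gt (N : ℕ) {t : ℤ} (h : (N : ℤ) < t) : zch N t = 0 := by
  have h0 : 0 ≤ t := le_trans (Int.ofNat_nonneg N) h.le
  have : N < t.toNat := by omega
  simp [zch, h0, Nat.choose_eq_zero_of_lt this]

lemma zch_pascal (N : ℕ) (t : ℤ) : zch (N + 1) (t + 1) = zch N t + zch N (t + 1) := by
  rcases lt_trichotomy t (-1) with h | h | h
  · rw [zch_neg _ (by omega), zch_neg _ (by omega), zch_neg _ (by omega)]; ring
  · subst h
    simp [zch]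
  · have h0 : 0 ≤ t := by omega
    lift t to ℕ using h0
    have : ((t : ℤ) + 1) = ((t + 1 : ℕ) : ℤ) := by push_cast; ring
    rw [this, zch_natCast, zch_natCast, zch_natCast, Nat.choose_succ_succ]
    push_cast; ring

lemma zch_mul (N : ℕ) (t : ℤ) : (t + 1) * zch N (t + 1) = ((N : ℤ) - t) * zch N t := by
  rcases lt_trichotomy t (-1) with h | h | h
  · rw [zch_neg _ (by omega), zch_neg _ (by omega)]; ring
  · subst h; norm_num [zch]
  · have h0 : 0 ≤ t := by omega
    lift t to ℕ using h0
    have : ((t : ℤ) + 1) = ((t + 1 : ℕ) : ℤ) := by push_cast; ring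
    rw [this, zch_natCast, zch_natCast]
    rcases le_or_gt t N with hle | hlt
    · have hc := Nat.choose_succ_right_eq N t
      zify [hle] at hc
      push_cast
      linarith [hc]
    · rw [Nat.choose_eq_zero_of_lt hlt, Nat.choose_eq_zero_of_lt (by omega)]
      push_cast; ring

lemma zch_succ_mul (N : ℕ) (t : ℤ) :
    (t + 1) * zch (N + 1) (t + 1) = ((N : ℤ) + 1) * zch N t := by
  rcases lt_trichotomy t (-1) with h | h | h
  · rw [zch_neg _ (by omega), zch_neg _ (by omega)]; ring
  · subst h; norm_num [zch]
  · have h0 : 0 ≤ t := by omega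
    lift t to ℕ using h0
    have : ((t : ℤ) + 1) = ((t + 1 : ℕ) : ℤ) := by push_cast; ring
    rw [this, zch_natCast, zch_natCast]
    have hc := Nat.add_one_mul_choose_eq N t
    zify at hc
    push_cast at hc ⊢
    linarith [hc]

lemma vdm (M N : ℕ) : ∀ a : ℤ,
    zch (M + N) a = ∑ t ∈ range (N + 1), (N.choose t : ℤ) * zch M (a - t) := by
  induction N with
  | zero => intro a; simp
  | succ N ih =>
    intro a
    have h1 : zch (M + (N + 1)) a = zch (M + N) (a - 1) + zch (M + N) a := by
      have := zch_pascal (M + N) (a - 1)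
      simpa [show M + (N+1) = (M+N)+1 by ring, sub_add_cancel] using this
    rw [h1, ih, ih]
    rw [Finset.sum_range_succ' (fun t => ((N+1).choose t : ℤ) * zch M (a - t)) (N+1)]
    have hsplit : ∀ t : ℕ, (((N+1).choose (t+1) : ℕ) : ℤ) * zch M (a - (t+1))
        = (N.choose t : ℤ) * zch M ((a - 1) - t) + (N.choose (t+1) : ℤ) * zch M ((a-1) - t) := by
      intro t
      have : (N+1).choose (t+1) = N.choose t + N.choose (t+1) := Nat.choose_succ_succ N t
      rw [this]
      push_cast
      have : a - (↑t + 1) = (a - 1) - t := by ring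
      rw [this]
      ring
    push_cast
    rw [Finset.sum_congr rfl (fun t _ => hsplit t)]
    rw [Finset.sum_add_distrib]
    have h2 : ∑ t ∈ range (N + 1), (N.choose t : ℤ) * zch M (a - t)
        = ∑ t ∈ range (N+1), (N.choose (t+1) : ℤ) * zch M ((a-1) - t) + zch M a := by
      rw [Finset.sum_range_succ' (fun t => (N.choose t : ℤ) * zch M (a - t)) N]
      rw [Finset.sum_range_succ (fun t => (N.choose (t+1) : ℤ) * zch M ((a-1) - t)) N]
      simp only [Nat.choose_succ_self, Nat.cast_zero, zero_mul, add_zero, Nat.choose_zero_right,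
        Nat.cast_one, one_mul, sub_zero]
      congr 1
      refine Finset.sum_congr rfl (fun t _ => ?_)
      congr 1
      push_cast
      ring
    rw [h2]
    simp only [Nat.choose_zero_right, Nat.cast_one, one_mul, sub_zero]
    ring

lemma key_s15 (n j : ℕ) (σ : ℤ) :
    ((n : ℤ) + 2*j - σ) * (((n+2*j+1).choose j : ℤ) * zch (n+j+1) (σ+2)
        + ((n+2*j).choose j : ℤ) * zch (n+j+1) (σ+1))
    = (j : ℤ) * ((n+2*j).choose j : ℤ) * zch (n+j) σ
        + ((j : ℤ)+1) * ((n+2*j+2).choose (j+1) : ℤ) * zch (n+j+1) (σ+2) := by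
  have h1 : ((j : ℤ)+1) * ((n+2*j+2).choose (j+1) : ℤ)
      = ((n : ℤ)+2*j+2) * ((n+2*j+1).choose j : ℤ) := by
    have := Nat.add_one_mul_choose_eq (n+2*j+1) j
    zify at this
    push_cast at this ⊢
    linarith
  have h2 : zch (n+j+1) (σ+1) = zch (n+j) σ + zch (n+j) (σ+1) := by
    have := zch_pascal (n+j) σ
    convert this using 2 <;> push_cast <;> ring
  have h3 : (σ+1) * zch (n+j) (σ+1) = (((n+j : ℕ) : ℤ) - σ) * zch (n+j) σ :=
    zch_mul (n+j) σ
  have h4 : (σ+2) * zch (n+j+1) (σ+2) = (((n+j : ℕ) : ℤ)+1) * zch (n+j) (σ+1) := by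
    have := zch_succ_mul (n+j) (σ+1)
    convert this using 2 <;> push_cast <;> ring
  have h5 : ((n : ℤ)+j+1) * ((n+2*j+1).choose j : ℤ)
      = ((n : ℤ)+2*j+1) * ((n+2*j).choose j : ℤ) := by
    have := Nat.choose_mul_succ_eq (n+2*j) j
    have hs : n+2*j+1-j = n+j+1 := by omega
    rw [hs] at this
    zify at this
    push_cast at this ⊢
    linarith
  push_cast at h3 h4
  linear_combination (-(zch (n+j+1) (σ+2))) * h1 + (((n:ℤ)+2*j-σ) * ((n+2*j).choose j : ℤ)) * h2
    + (-((n+2*j).choose j : ℤ)) * h3 + (-((n+2*j+1).choose j : ℤ)) * h4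
    + (-(zch (n+j) (σ+1))) * h5

lemma inner (n k t : ℕ) (hk : 1 ≤ k) (ht : t ≤ n + k) :
    ∑ j ∈ range k, (-1:ℤ)^j * (((n+2*j+1).choose j : ℤ) * zch (n+j+1) (2*n+2*j+3 - t)
      + ((n+2*j).choose j : ℤ) * zch (n+j+1) (2*n+2*j+2 - t))
    = if t = n+1 then 1 else 0 := by
  by_cases hteq : t = n + 1
  · subst hteq
    rw [if_pos rfl]
    rw [Finset.sum_eq_single_of_mem 0 (Finset.mem_range.mpr hk)]
    · have z1 : zch (n+0+1) (2*(n:ℤ)+2*(0:ℕ)+3 - ((n+1:ℕ):ℤ)) = 0 := by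
        have e : (2*(n:ℤ)+2*(0:ℕ)+3 - ((n+1:ℕ):ℤ)) = ((n+2 : ℕ) : ℤ) := by push_cast; ring
        rw [e, zch_natCast, Nat.choose_eq_zero_of_lt (by omega)]; norm_num
      have z2 : zch (n+0+1) (2*(n:ℤ)+2*(0:ℕ)+2 - ((n+1:ℕ):ℤ)) = 1 := by
        have e : (2*(n:ℤ)+2*(0:ℕ)+2 - ((n+1:ℕ):ℤ)) = ((n+1 : ℕ) : ℤ) := by push_cast; ring
        rw [e, zch_natCast, Nat.choose_self]; norm_num
      rw [z1, z2]
      simp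
    · intro j _ hj
      have z1 : zch (n+j+1) (2*(n:ℤ)+2*(j:ℕ)+3 - ((n+1:ℕ):ℤ)) = 0 := by
        have e : (2*(n:ℤ)+2*(j:ℕ)+3 - ((n+1:ℕ):ℤ)) = ((n+2*j+2 : ℕ) : ℤ) := by push_cast; ring
        rw [e, zch_natCast, Nat.choose_eq_zero_of_lt (by omega)]; norm_num
      have z2 : zch (n+j+1) (2*(n:ℤ)+2*(j:ℕ)+2 - ((n+1:ℕ):ℤ)) = 0 := by
        have e : (2*(n:ℤ)+2*(j:ℕ)+2 - ((n+1:ℕ):ℤ)) = ((n+2*j+1 : ℕ) : ℤ) := by push_cast; ring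
        rw [e, zch_natCast, Nat.choose_eq_zero_of_lt (by omega)]; norm_num
      rw [z1, z2]
      ring
  · rw [if_neg hteq]
    have hne : (t : ℤ) - n - 1 ≠ 0 := by
      intro h; apply hteq; omega
    set D : ℕ → ℤ := fun j => (-1:ℤ)^j * j * ((n+2*j).choose j : ℤ) * zch (n+j) (2*n+2*j+1 - t)
      with hD
    have hmul : ((t : ℤ) - n - 1) * (∑ j ∈ range k, (-1:ℤ)^j
        * (((n+2*j+1).choose j : ℤ) * zch (n+j+1) (2*n+2*j+3 - t)
          + ((n+2*j).choose j : ℤ) * zch (n+j+1) (2*n+2*j+2 - t))) = 0 := by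
      rw [Finset.mul_sum]
      have hterm : ∀ j ∈ range k, ((t : ℤ) - n - 1) * ((-1:ℤ)^j
          * (((n+2*j+1).choose j : ℤ) * zch (n+j+1) (2*n+2*j+3 - t)
            + ((n+2*j).choose j : ℤ) * zch (n+j+1) (2*n+2*j+2 - t)))
          = D j - D (j+1) := by
        intro j _
        have hk2 := key_s15 n j (2*(n:ℤ)+2*j+1 - t)
        have i1 : (2*(n:ℤ)+2*j+1 - t) + 2 = 2*(n:ℤ)+2*(j:ℕ)+3 - t := by ring
        have i2 : (2*(n:ℤ)+2*j+1 - t) + 1 = 2*(n:ℤ)+2*(j:ℕ)+2 - t := by ring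
        rw [i1, i2] at hk2
        have hcoef : (n : ℤ) + 2*j - (2*(n:ℤ)+2*j+1 - t) = (t : ℤ) - n - 1 := by ring
        rw [hcoef] at hk2
        have hDj : D j = (-1:ℤ)^j * j * ((n+2*j).choose j : ℤ) * zch (n+j) (2*(n:ℤ)+2*(j:ℕ)+1 - t) := by
          rw [hD]
        have hDj1 : D (j+1) = (-1:ℤ)^(j+1) * ((j:ℤ)+1) * ((n+2*j+2).choose (j+1) : ℤ)
            * zch (n+j+1) (2*(n:ℤ)+2*(j:ℕ)+3 - t) := by
          rw [hD]
          simp only [show n+2*(j+1) = n+2*j+2 from by ring, show n+(j+1) = n+j+1 from by ring]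
          push_cast
          ring_nf
        rw [hDj, hDj1]
        push_cast
        linear_combination (-1:ℤ)^j * hk2
      rw [Finset.sum_congr rfl hterm, Finset.sum_range_sub']
      have hz : zch (n+k) (2*(n:ℤ)+2*(k:ℕ)+1 - t) = 0 :=
        zch_eq_zero_of_gt _ (by push_cast; omega)
      simp [hD, hz]
    rcases mul_eq_zero.mp hmul with h | h
    · exact absurd h hne
    · exact h

theorem stmt_15 (n k : ℕ) (hk : 1 ≤ k) :
    vseq k n = (-1) ^ n * ((n + k).choose (n + 1) : ℤ) := by
  rw [vseq, icc_eq_map n k, Finset.sum_map]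
  simp only [Function.Embedding.coeFn_mk]
  have hterm : ∀ j ∈ range k,
      (-(gchoose ((n:ℤ) - ((n:ℤ)+1+(j:ℤ))) ((n:ℤ)+1+(j:ℤ))
          * gchoose ((n:ℤ) + (k:ℤ) + ((n:ℤ)+1+(j:ℤ))) (2*((n:ℤ)+1+(j:ℤ)) + 1))
        + gchoose ((n:ℤ) - ((n:ℤ)+1+(j:ℤ))) (((n:ℤ)+1+(j:ℤ)) - 1)
          * gchoose ((n:ℤ) + (k:ℤ) + ((n:ℤ)+1+(j:ℤ))) (2*((n:ℤ)+1+(j:ℤ))))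
      = (-1:ℤ)^n * ((-1:ℤ)^j * (((n+2*j+1).choose j : ℤ) * ((2*n+k+j+1).choose (2*n+2*j+3) : ℤ)
          + ((n+2*j).choose j : ℤ) * ((2*n+k+j+1).choose (2*n+2*j+2) : ℤ))) := by
    intro j _
    rw [g1eval, g2eval, g3eval, g4eval]
    rw [pow_add, pow_add, pow_add]
    ring
  rw [Finset.sum_congr rfl hterm, ← Finset.mul_sum]
  congr 1
  have hvdm1 : ∀ j : ℕ, ((2*n+k+j+1).choose (2*n+2*j+3) : ℤ)
      = ∑ t ∈ range (n+k+1), ((n+k).choose t : ℤ) * zch (n+j+1) (2*(n:ℤ)+2*(j:ℕ)+3 - t) := by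
    intro j
    have := vdm (n+j+1) (n+k) ((2*n+2*j+3 : ℕ) : ℤ)
    rw [show n+j+1+(n+k) = 2*n+k+j+1 from by ring, zch_natCast] at this
    rw [this]
    refine Finset.sum_congr rfl (fun t _ => ?_)
    rw [show ((2*n+2*j+3:ℕ):ℤ) - (t:ℤ) = 2*(n:ℤ)+2*(j:ℤ)+3 - (t:ℤ) from by push_cast; ring]
  have hvdm2 : ∀ j : ℕ, ((2*n+k+j+1).choose (2*n+2*j+2) : ℤ)
      = ∑ t ∈ range (n+k+1), ((n+k).choose t : ℤ) * zch (n+j+1) (2*(n:ℤ)+2*(j:ℕ)+2 - t) := by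
    intro j
    have := vdm (n+j+1) (n+k) ((2*n+2*j+2 : ℕ) : ℤ)
    rw [show n+j+1+(n+k) = 2*n+k+j+1 from by ring, zch_natCast] at this
    rw [this]
    refine Finset.sum_congr rfl (fun t _ => ?_)
    rw [show ((2*n+2*j+2:ℕ):ℤ) - (t:ℤ) = 2*(n:ℤ)+2*(j:ℤ)+2 - (t:ℤ) from by push_cast; ring]
  calc ∑ j ∈ range k, (-1:ℤ)^j * (((n+2*j+1).choose j : ℤ) * ((2*n+k+j+1).choose (2*n+2*j+3) : ℤ)
          + ((n+2*j).choose j : ℤ) * ((2*n+k+j+1).choose (2*n+2*j+2) : ℤ))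
      = ∑ j ∈ range k, ∑ t ∈ range (n+k+1), ((n+k).choose t : ℤ) *
          ((-1:ℤ)^j * (((n+2*j+1).choose j : ℤ) * zch (n+j+1) (2*(n:ℤ)+2*(j:ℕ)+3 - t)
            + ((n+2*j).choose j : ℤ) * zch (n+j+1) (2*(n:ℤ)+2*(j:ℕ)+2 - t))) := by
        refine Finset.sum_congr rfl (fun j _ => ?_)
        rw [hvdm1 j, hvdm2 j, Finset.mul_sum, Finset.mul_sum, ← Finset.sum_add_distrib,
          Finset.mul_sum]
        refine Finset.sum_congr rfl (fun t _ => ?_)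
        ring
    _ = ∑ t ∈ range (n+k+1), ((n+k).choose t : ℤ) *
          (∑ j ∈ range k, (-1:ℤ)^j * (((n+2*j+1).choose j : ℤ) * zch (n+j+1) (2*(n:ℤ)+2*(j:ℕ)+3 - t)
            + ((n+2*j).choose j : ℤ) * zch (n+j+1) (2*(n:ℤ)+2*(j:ℕ)+2 - t))) := by
        rw [Finset.sum_comm]
        refine Finset.sum_congr rfl (fun t _ => ?_)
        rw [Finset.mul_sum]
    _ = ∑ t ∈ range (n+k+1), ((n+k).choose t : ℤ) * (if t = n+1 then 1 else 0) := by
        refine Finset.sum_congr rfl (fun t ht => ?_)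
        rw [inner n k t hk (by have := Finset.mem_range.mp ht; omega)]
    _ = ((n+k).choose (n+1) : ℤ) := by
        rw [Finset.sum_congr rfl (fun t _ => by rw [mul_ite, mul_one, mul_zero])]
        rw [Finset.sum_ite_eq' (range (n+k+1)) (n+1) (fun t => ((n+k).choose t : ℤ))]
        rw [if_pos (Finset.mem_range.mpr (by omega))]
end
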